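/- Let τ_n > 0 be a monotonically increasing sequence, let 𝔔 be a class of joint distributions Q of (X,Y) on ℝ^d × {0,1}, and for each n let N_n be a finite collection of subsets of ℝ^d such that: (i) for all Q ∈ 𝔔, every G ∈ ⋃_n N_n and the Bayes rule G*_Q are Q-measurable; and there is N₀ ∈ ℕ such that for all n ≥ N₀: (ii) there is c₂ > 0 such that for every Q ∈ 𝔔 there exists G ∈ N_n with d_{f_Q}(G, G*_Q) ≤ c₂ τ_n^{-1}; (iii) there exist c₃, ρ > 0 with log|N_n| ≤ c₃ n^{ρ/(ρ+2)}. Then for every p ≥ 1, with τ̃_n := min{τ_n, n^{1/(ρ+2)}}, it holds that limsup_{n→∞} sup_{Q∈𝔔} τ̃_n^{p} · E[d_{f_Q}^p(Ĝ_n, G*_Q)] < ∞, where Ĝ_n is any empirical risk minimizer over N_n based on n i.i.d. observations from Q. -/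

import Mathlib

open MeasureTheory

/-! ## Classification models -/

/-- A joint distribution `Q` of `(X,Y)` on `ℝ^d × {0,1}`, encoded by the marginal
distribution `μ` of `X` together with the regression function `f x = Q(Y = 1 ∣ X = x)`. -/
structure ClsModel (d : ℕ) where
  μ : Measure (Fin d → ℝ)
  prob : IsProbabilityMeasure μ
  f : (Fin d → ℝ) → ℝ
  f_meas : Measurable f
  f_nonneg : ∀ x, 0 ≤ f x
  f_le_one : ∀ x, f x ≤ 1

/-- The joint distribution of `(X,Y)` on `(ℝ^d) × Bool` determined by a model. -/
noncomputable def ClsModel.joint {d : ℕ} (Q : ClsModel d) :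
    Measure ((Fin d → ℝ) × Bool) :=
  Q.μ.bind fun x =>
    ENNReal.ofReal (Q.f x) • Measure.dirac (x, true)
      + ENNReal.ofReal (1 - Q.f x) • Measure.dirac (x, false)

/-- The distribution of `n` i.i.d. samples from `Q`. -/
noncomputable def ClsModel.samples {d : ℕ} (Q : ClsModel d) (n : ℕ) :
    Measure (Fin n → (Fin d → ℝ) × Bool) :=
  Measure.pi fun _ => Q.joint

/-- `d_{f_Q}(G₁,G₂) = ∫_{G₁ Δ G₂} |2 f_Q - 1| dQ_X`. -/
noncomputable def ClsModel.dF {d : ℕ} (Q : ClsModel d) (G₁ G₂ : Set (Fin d → ℝ)) : ℝ :=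
  ∫ x in symmDiff G₁ G₂, |2 * Q.f x - 1| ∂Q.μ

/-- `d_Δ(G₁,G₂) = Q_X(G₁ Δ G₂)`. -/
noncomputable def ClsModel.dDel {d : ℕ} (Q : ClsModel d) (G₁ G₂ : Set (Fin d → ℝ)) : ℝ :=
  (Q.μ (symmDiff G₁ G₂)).toReal

/-- The Bayes rule `G*_Q = {x ∣ f_Q(x) ≥ 1/2}`. -/
def ClsModel.bayes {d : ℕ} (Q : ClsModel d) : Set (Fin d → ℝ) := {x | 1/2 ≤ Q.f x}

open Classical in
/-- The empirical misclassification error `R_n(G)` of a set `G` for data `ω`. -/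
noncomputable def empRisk {d n : ℕ} (ω : Fin n → (Fin d → ℝ) × Bool)
    (G : Set (Fin d → ℝ)) : ℝ :=
  (n : ℝ)⁻¹ * ∑ i : Fin n, if ((ω i).1 ∈ G ↔ (ω i).2 = true) then 0 else 1

/-- `Ghat` is an empirical risk minimizer over the collection `𝒩`. -/
def isERM {d n : ℕ} (𝒩 : Set (Set (Fin d → ℝ)))
    (Ghat : (Fin n → (Fin d → ℝ) × Bool) → Set (Fin d → ℝ)) : Prop :=
  ∀ ω, Ghat ω ∈ 𝒩 ∧ ∀ G ∈ 𝒩, empRisk ω (Ghat ω) ≤ empRisk ω G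

/-- The expected `p`-th power of the distance between an estimator `Ghat` (a function of
`n` i.i.d. samples from `Q`) and the Bayes rule, for a distance `dist`. -/
noncomputable def clsRisk {d : ℕ} (Q : ClsModel d) (n : ℕ)
    (Ghat : (Fin n → (Fin d → ℝ) × Bool) → Set (Fin d → ℝ))
    (dist : ClsModel d → Set (Fin d → ℝ) → Set (Fin d → ℝ) → ℝ) (p : ℝ) : ℝ :=
  ∫ ω, dist Q (Ghat ω) Q.bayes ^ p ∂Q.samples n

/-! ## ReLU Neural networks -/

/-- A feedforward ReLU neural network with `L` hidden layers: `dims k` is the width of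
layer `k` (`dims 0` the input dimension, `dims (L+1)` the output dimension),
`W k` is the weight matrix mapping layer `k` to layer `k+1` (the paper's `W_{k+1}`),
and `b k` is the shift vector of hidden layer `k+1` (the paper's `b_{k+1}`).
Entries outside the relevant ranges are zero. -/
structure Net where
  L : ℕ
  dims : ℕ → ℕ
  W : ℕ → ℕ → ℕ → ℝ
  b : ℕ → ℕ → ℝ
  W_zero : ∀ k i j, L + 1 ≤ k ∨ dims (k+1) ≤ i ∨ dims k ≤ j → W k i j = 0
  b_zero : ∀ k j, L ≤ k ∨ dims (k+1) ≤ j → b k j = 0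

/-- The hidden state of layer `k` : `h_0 = x` (truncated to the input coordinates), and
`h_{k+1} = σ_{b_{k+1}}(W_{k+1} h_k)` (coordinatewise shifted ReLU). -/
noncomputable def Net.hidden (Φ : Net) : ℕ → (ℕ → ℝ) → ℕ → ℝ
  | 0, x, j => if j < Φ.dims 0 then x j else 0
  | k+1, x, j =>
    if j < Φ.dims (k+1) then
      max ((∑ i ∈ Finset.range (Φ.dims k), Φ.W k j i * Net.hidden Φ k x i) - Φ.b k j) 0
    else 0

/-- The output `W_{L+1} σ_{b_L} W_L ⋯ σ_{b_1} W_1 x` of the network. -/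
noncomputable def Net.out (Φ : Net) (x : ℕ → ℝ) : ℕ → ℝ :=
  fun j =>
    if j < Φ.dims (Φ.L + 1) then
      ∑ i ∈ Finset.range (Φ.dims Φ.L), Φ.W Φ.L j i * Net.hidden Φ Φ.L x i
    else 0

/-- The realization of the network as a map `ℝ^{din} → ℝ^{dout}`. -/
noncomputable def Net.realizeV (Φ : Net) (din dout : ℕ) (x : Fin din → ℝ) :
    Fin dout → ℝ :=
  fun j => Φ.out (fun i => if h : i < din then x ⟨i, h⟩ else 0) j

/-- The realization of a network with one-dimensional output, as a map `ℝ^{din} → ℝ`. -/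
noncomputable def Net.realize (Φ : Net) (din : ℕ) (x : Fin din → ℝ) : ℝ :=
  Φ.out (fun i => if h : i < din then x ⟨i, h⟩ else 0) 0

open Classical in
/-- The sparsity of a network: the total number of nonzero entries of the weight
matrices `W_1, …, W_{L+1}` and the shift vectors `b_1, …, b_L`. -/
noncomputable def Net.sparsity (Φ : Net) : ℕ :=
  (∑ k ∈ Finset.range (Φ.L + 1), ∑ i ∈ Finset.range (Φ.dims (k+1)),
      ((Finset.range (Φ.dims k)).filter fun j => Φ.W k i j ≠ 0).card)
    + ∑ k ∈ Finset.range Φ.L,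
        ((Finset.range (Φ.dims (k+1))).filter fun j => Φ.b k j ≠ 0).card

/-- The weight grid `W_c = {k 2^{-c} : k ∈ ℤ, |k| ≤ 2^c}`. -/
def Wgrid (c : ℕ) : Set ℝ :=
  {w | ∃ k : ℤ, |k| ≤ 2 ^ c ∧ w = (k : ℝ) * (2 : ℝ) ^ (-(c : ℤ))}

/-- All weights (matrix entries and shifts) of `Φ` belong to the grid `W_c`. -/
def Net.weightsIn (Φ : Net) (c : ℕ) : Prop :=
  (∀ k i j, Φ.W k i j ∈ Wgrid c) ∧ ∀ k j, Φ.b k j ∈ Wgrid c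

/-- The class `N_{L₀,s₀,c}` of subsets of `[0,1]^d` of the form `R(Φ)^{-1}(1)` for ReLU
networks with input dimension `d`, one-dimensional output, at most `L₀` layers,
sparsity at most `s₀` and weights in `W_c`. -/
def NNclass (d : ℕ) (L₀ s₀ : ℝ) (c : ℕ) : Set (Set (Fin d → ℝ)) :=
  {G | ∃ Φ : Net, Φ.dims 0 = d ∧ Φ.dims (Φ.L + 1) = 1 ∧
    (Φ.L : ℝ) ≤ L₀ ∧ (Φ.sparsity : ℝ) ≤ s₀ ∧ Φ.weightsIn c ∧
    G = {x : Fin d → ℝ | x ∈ Set.Icc 0 1 ∧ Φ.realize d x = 1}}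

/-- The class of subsets of `[0,1]^d` corresponding to arbitrary ReLU networks. -/
def allNNsets (d : ℕ) : Set (Set (Fin d → ℝ)) :=
  {G | ∃ Φ : Net, Φ.dims 0 = d ∧ Φ.dims (Φ.L + 1) = 1 ∧
    G = {x : Fin d → ℝ | x ∈ Set.Icc 0 1 ∧ Φ.realize d x = 1}}

/-! ## Hölder classes -/

/-- The unit cube `[0,1]^s`. -/
def cube (s : ℕ) : Set (Fin s → ℝ) := Set.Icc 0 1

/-- Partial derivative in coordinate direction `i` (within the cube). -/
noncomputable def pderiv' {s : ℕ} (i : Fin s) (f : (Fin s → ℝ) → ℝ) :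
    (Fin s → ℝ) → ℝ :=
  fun x => fderivWithin ℝ f (cube s) x (Pi.single i 1)

/-- The mixed partial derivative `∂^α f` for a multi-index `α`. -/
noncomputable def mderiv {s : ℕ} (α : Fin s → ℕ) (f : (Fin s → ℝ) → ℝ) :
    (Fin s → ℝ) → ℝ :=
  (List.finRange s).foldr (fun i g => (pderiv' i)^[α i] g) f

/-- `m = max {k ∈ ℕ ∣ k < β}` for `β > 0`. -/
noncomputable def holm (β : ℝ) : ℕ := ⌈β⌉₊ - 1

/-- The multi-indices `α` with `|α| ≤ m`. -/
def MIdxLe (s m : ℕ) : Finset (Fin s → ℕ) :=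
  (Fintype.piFinset fun _ : Fin s => Finset.range (m+1)).filter fun α => (∑ i, α i) ≤ m

/-- The multi-indices `α` with `|α| = m`. -/
def MIdxEq (s m : ℕ) : Finset (Fin s → ℕ) :=
  (Fintype.piFinset fun _ : Fin s => Finset.range (m+1)).filter fun α => (∑ i, α i) = m

/-- The Hölder ball `F_{β,B,s}`: continuous functions on `[0,1]^s` whose Hölder norm
`Σ_{|α|≤m} ‖∂^α f‖_∞ + Σ_{|α|=m} sup_{x≠y} |∂^α f(x)-∂^α f(y)|/‖x-y‖_∞^{β-m}`
is at most `B` (expressed via existence of per-term bounds summing to at most `B`). -/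
def HolderBall (β B : ℝ) (s : ℕ) : Set ((Fin s → ℝ) → ℝ) :=
  {f | ContinuousOn f (cube s) ∧
    ∃ sb : (Fin s → ℕ) → ℝ, ∃ hb : (Fin s → ℕ) → ℝ,
      (∀ α ∈ MIdxLe s (holm β), ∀ x ∈ cube s, |mderiv α f x| ≤ sb α) ∧
      (∀ α ∈ MIdxEq s (holm β), ∀ x ∈ cube s, ∀ y ∈ cube s, x ≠ y →
        |mderiv α f x - mderiv α f y| ≤ hb α * ‖x - y‖ ^ (β - holm β)) ∧
      (∑ α ∈ MIdxLe s (holm β), sb α) + ∑ α ∈ MIdxEq s (holm β), hb α ≤ B}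

/-- The one-dimensional Hölder ball `F_{β,B,1}` of functions on `[0,1]`. -/
def Holder1 (β B : ℝ) : Set (ℝ → ℝ) :=
  {g | ContinuousOn g (Set.Icc 0 1) ∧
    ∃ sb : ℕ → ℝ, ∃ hb : ℝ,
      (∀ k ≤ holm β, ∀ x ∈ Set.Icc (0:ℝ) 1,
        |iteratedDerivWithin k g (Set.Icc 0 1) x| ≤ sb k) ∧
      (∀ x ∈ Set.Icc (0:ℝ) 1, ∀ y ∈ Set.Icc (0:ℝ) 1, x ≠ y →
        |iteratedDerivWithin (holm β) g (Set.Icc 0 1) x -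
            iteratedDerivWithin (holm β) g (Set.Icc 0 1) y| ≤
          hb * |x - y| ^ (β - holm β)) ∧
      (∑ k ∈ Finset.range (holm β + 1), sb k) + hb ≤ B}

/-- The class `H_{β,B}` of Hölder functions whose derivatives vanish at `0` up to
order `m` (equivalently, for all integer orders `< β`). -/
def Hclass (β B : ℝ) : Set (ℝ → ℝ) :=
  {g | g ∈ Holder1 β B ∧ ∀ k ≤ holm β, iteratedDerivWithin k g (Set.Icc 0 1) 0 = 0}

/-! ## Boundary-fragment classes -/

/-- Remove the `j`-th coordinate: `x ↦ x_{-j}`. -/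
def rmCoord {d : ℕ} (j : Fin d) (x : Fin d → ℝ) : Fin (d-1) → ℝ :=
  fun i =>
    if h : (i : ℕ) < (j : ℕ) then x ⟨i, by have := i.isLt; omega⟩
    else x ⟨(i : ℕ) + 1, by have := i.isLt; omega⟩

/-- Membership of a set `H ⊆ [0,1]^d` in the class `K^F_{Q,β,B,ε₁,ε₂,r,d}`. -/
def memK (d : ℕ) (Q : ClsModel d) (F : Set ((Fin (d-1) → ℝ) → ℝ))
    (β B ε₁ ε₂ : ℝ) (r : ℕ) (H : Set (Fin d → ℝ)) : Prop :=
  ∃ u : ℕ, u ≤ r ∧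
  ∃ (jj : Fin u → Fin d) (ι : Fin u → ℝ) (γ : Fin u → (Fin (d-1) → ℝ) → ℝ)
    (a bb : Fin u → Fin d → ℝ),
    (∀ ν, ι ν = 1 ∨ ι ν = -1) ∧
    (∀ ν, γ ν ∈ F) ∧
    (∀ ν i, 0 ≤ a ν i ∧ a ν i < bb ν i ∧ bb ν i ≤ 1) ∧
    H = (⋃ ν, Set.Icc (a ν) (bb ν) ∩ {x | ι ν * x (jj ν) ≤ γ ν (rmCoord (jj ν) x)}) ∧
    (∀ ν₁ ν₂, ν₁ ≠ ν₂ →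
      volume (Set.Icc (a ν₁) (bb ν₁) ∩ Set.Icc (a ν₂) (bb ν₂)) = 0) ∧
    (∀ ν, ε₂ ≤ bb ν (jj ν) - a ν (jj ν)) ∧
    (0 < β → ∀ ν, ∀ x ∈ Set.Icc (a ν) (bb ν) ∩ frontier H,
      ∃ g ∈ Hclass β B, ∀ y : ℝ,
        max 0 (x (jj ν) - ε₁) ≤ y → y ≤ min 1 (x (jj ν) + ε₁) →
          |2 * Q.f (Function.update x (jj ν) y) - 1| ≤ g |y - x (jj ν)|)

/-! ## Composition classes -/

/-- Evaluate a chain of maps `g 0, g 1, …` up to stage `k`. -/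
noncomputable def chainEval (dd : ℕ → ℕ)
    (g : ∀ i : ℕ, (Fin (dd i) → ℝ) → (Fin (dd (i+1)) → ℝ)) :
    (k : ℕ) → (Fin (dd 0) → ℝ) → (Fin (dd k) → ℝ)
  | 0 => fun x => x
  | k+1 => fun x => g k (chainEval dd g k x)

/-- Membership in the composition class `G_{r,t,β,B,d}`: `γ = γ_r ∘ ⋯ ∘ γ_1`, each
component of `γ_i` being a Hölder function of `t_i` of the variables (here `0`-indexed:
`g i`, `t i`, `β i` and `dd i` correspond to the paper's `γ_{i+1}`, `t_{i+1}`,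
`β_{i+1}` and `d_{i+1}`). -/
def memComp (r : ℕ) (t : ℕ → ℕ) (dd : ℕ → ℕ) (β : ℕ → ℝ) (B : ℝ)
    (γ : (Fin (dd 0) → ℝ) → ℝ) : Prop :=
  ∃ g : ∀ i : ℕ, (Fin (dd i) → ℝ) → (Fin (dd (i+1)) → ℝ),
    (∀ i < r, ∀ j : Fin (dd (i+1)),
      ∃ γij : (Fin (t i) → ℝ) → ℝ, ∃ sel : Fin (t i) → Fin (dd i),
        γij ∈ HolderBall (β i) B (t i) ∧
        (i + 1 < r → ∀ z ∈ cube (t i), γij z ∈ Set.Icc (0:ℝ) 1) ∧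
        ∀ x, g i x j = γij fun k => x (sel k)) ∧
    ∀ x, ∀ j : Fin (dd r), γ x = chainEval dd g r x j

/-- `β_i^* = β_i ∏_{k=i+1}^r min{β_k,1}` (0-indexed). -/
noncomputable def betaStar (r : ℕ) (β : ℕ → ℝ) (i : ℕ) : ℝ :=
  β i * ∏ k ∈ Finset.Ico (i+1) r, min (β k) 1

section Aux

open Real MeasureTheory
open scoped ENNReal

namespace ClsProof

variable {d : ℕ}

open Classical in
/-- The 0-1 loss of a set `G` at a sample point `z`. -/
noncomputable def loss (G : Set (Fin d → ℝ)) (z : (Fin d → ℝ) × Bool) : ℝ :=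
  if ((z.1 ∈ G ↔ z.2 = true)) then 0 else 1

/-- The error event. -/
def lossSet (G : Set (Fin d → ℝ)) : Set ((Fin d → ℝ) × Bool) :=
  {z | ¬ (z.1 ∈ G ↔ z.2 = true)}

lemma lossSet_eq (G : Set (Fin d → ℝ)) :
    lossSet G = (G ×ˢ {false}) ∪ (Gᶜ ×ˢ {true}) := by
  ext ⟨x, b⟩
  cases b <;> simp [lossSet]

lemma measurableSet_lossSet {G : Set (Fin d → ℝ)} (hG : MeasurableSet G) :
    MeasurableSet (lossSet G) := by
  rw [lossSet_eq]
  exact (hG.prod (MeasurableSet.singleton false)).union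
    (hG.compl.prod (MeasurableSet.singleton true))

lemma loss_eq_indicator (G : Set (Fin d → ℝ)) :
    loss G = (lossSet G).indicator (fun _ => (1:ℝ)) := by
  funext z
  by_cases h : (z.1 ∈ G ↔ z.2 = true) <;>
    simp [loss, lossSet, Set.indicator_apply, h]

lemma measurable_loss {G : Set (Fin d → ℝ)} (hG : MeasurableSet G) :
    Measurable (loss G) := by
  rw [loss_eq_indicator]
  exact measurable_const.indicator (measurableSet_lossSet hG)

lemma loss_mem (G : Set (Fin d → ℝ)) (z : (Fin d → ℝ) × Bool) :
    loss G z = 0 ∨ loss G z = 1 := by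
  unfold loss; split <;> simp

lemma empRisk_eq {n : ℕ} (ω : Fin n → (Fin d → ℝ) × Bool) (G : Set (Fin d → ℝ)) :
    empRisk ω G = (n : ℝ)⁻¹ * ∑ i : Fin n, loss G (ω i) := rfl

variable (Q : ClsModel d)

/-- The kernel defining the joint distribution. -/
noncomputable def ker (x : Fin d → ℝ) : Measure ((Fin d → ℝ) × Bool) :=
  ENNReal.ofReal (Q.f x) • Measure.dirac (x, true)
    + ENNReal.ofReal (1 - Q.f x) • Measure.dirac (x, false)

lemma joint_eq : Q.joint = Q.μ.bind (ker Q) := rfl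

lemma ker_apply (x : Fin d → ℝ) {s : Set ((Fin d → ℝ) × Bool)}
    (hs : MeasurableSet s) :
    ker Q x s = ENNReal.ofReal (Q.f x) * s.indicator 1 (x, true)
      + ENNReal.ofReal (1 - Q.f x) * s.indicator 1 (x, false) := by
  simp [ker, Measure.dirac_apply' _ hs]

lemma measurable_ker : Measurable (ker Q) := by
  refine Measure.measurable_measure.2 fun s hs => ?_
  simp only [ker_apply Q _ hs]
  have h1 : (fun x : Fin d → ℝ => s.indicator (1 : ((Fin d → ℝ) × Bool) → ℝ≥0∞) (x, true))
      = ((fun x : Fin d → ℝ => (x, true)) ⁻¹' s).indicator (1 : (Fin d → ℝ) → ℝ≥0∞) := by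
    funext x; by_cases h : (x, true) ∈ s <;> simp [Set.indicator_apply, Set.mem_preimage, h]
  have h2 : (fun x : Fin d → ℝ => s.indicator (1 : ((Fin d → ℝ) × Bool) → ℝ≥0∞) (x, false))
      = ((fun x : Fin d → ℝ => (x, false)) ⁻¹' s).indicator (1 : (Fin d → ℝ) → ℝ≥0∞) := by
    funext x; by_cases h : (x, false) ∈ s <;> simp [Set.indicator_apply, Set.mem_preimage, h]
  refine Measurable.add ?_ ?_
  · refine Measurable.mul (Q.f_meas.ennreal_ofReal) ?_
    rw [h1]
    exact measurable_one.indicator (hs.preimage (measurable_id.prodMk measurable_const))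
  · refine Measurable.mul ((measurable_const.sub Q.f_meas).ennreal_ofReal) ?_
    rw [h2]
    exact measurable_one.indicator (hs.preimage (measurable_id.prodMk measurable_const))

lemma joint_apply {s : Set ((Fin d → ℝ) × Bool)} (hs : MeasurableSet s) :
    Q.joint s = ∫⁻ x, ker Q x s ∂Q.μ :=
  show Q.μ.bind (ker Q) s = _ from Measure.bind_apply hs (measurable_ker Q).aemeasurable

lemma ker_univ (x : Fin d → ℝ) : ker Q x Set.univ = 1 := by
  rw [ker_apply Q x MeasurableSet.univ]
  simp only [Set.indicator_univ, Pi.one_apply, mul_one]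
  rw [← ENNReal.ofReal_add (Q.f_nonneg x) (by linarith [Q.f_le_one x])]
  norm_num

lemma joint_prob : IsProbabilityMeasure Q.joint := by
  haveI := Q.prob
  constructor
  rw [joint_apply Q MeasurableSet.univ]
  simp [ker_univ Q]


/-- The true risk `R(G)`. -/
noncomputable def trueRisk (G : Set (Fin d → ℝ)) : ℝ := ∫ z, loss G z ∂Q.joint

lemma integrable_of_bound {α : Type*} [MeasurableSpace α] (μ : Measure α)
    [IsFiniteMeasure μ] {g : α → ℝ} (hg : Measurable g) (C : ℝ)
    (hb : ∀ x, |g x| ≤ C) : Integrable g μ :=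
  (integrable_const C).mono' hg.aestronglyMeasurable
    (Filter.Eventually.of_forall fun x => by simpa using hb x)

lemma abs_loss_le (G : Set (Fin d → ℝ)) (z : (Fin d → ℝ) × Bool) : |loss G z| ≤ 1 := by
  rcases loss_mem G z with h | h <;> simp [h]

lemma integrable_loss {G : Set (Fin d → ℝ)} (hG : MeasurableSet G) :
    Integrable (loss G) Q.joint := by
  haveI := joint_prob Q
  exact integrable_of_bound _ (measurable_loss hG) 1 (abs_loss_le G)

lemma joint_lossSet {G : Set (Fin d → ℝ)} (hG : MeasurableSet G) :
    Q.joint (lossSet G) = (∫⁻ x in Gᶜ, ENNReal.ofReal (Q.f x) ∂Q.μ)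
      + ∫⁻ x in G, ENNReal.ofReal (1 - Q.f x) ∂Q.μ := by
  rw [joint_apply Q (measurableSet_lossSet hG)]
  have hker : ∀ x, ker Q x (lossSet G)
      = Gᶜ.indicator (fun x => ENNReal.ofReal (Q.f x)) x
        + G.indicator (fun x => ENNReal.ofReal (1 - Q.f x)) x := by
    intro x
    rw [ker_apply Q x (measurableSet_lossSet hG)]
    by_cases h : x ∈ G <;> simp [lossSet, Set.indicator_apply, h]
  simp_rw [hker]
  rw [lintegral_add_left (Q.f_meas.ennreal_ofReal.indicator hG.compl),
    lintegral_indicator hG.compl _, lintegral_indicator hG _]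

lemma lint_ofReal_ne_top {g : (Fin d → ℝ) → ℝ} (h1 : ∀ x, g x ≤ 1)
    (A : Set (Fin d → ℝ)) :
    (∫⁻ x in A, ENNReal.ofReal (g x) ∂Q.μ) ≠ ⊤ := by
  haveI := Q.prob
  refine ne_of_lt (lt_of_le_of_lt (le_trans
    (lintegral_mono fun x => ENNReal.ofReal_le_one.2 (h1 x)) (le_of_eq (setLIntegral_one A)))
    (measure_lt_top _ _))

lemma lint_ofReal_toReal {g : (Fin d → ℝ) → ℝ} (hg : Measurable g)
    (h0 : ∀ x, 0 ≤ g x) (h1 : ∀ x, g x ≤ 1) {A : Set (Fin d → ℝ)}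
    (_hA : MeasurableSet A) :
    (∫⁻ x in A, ENNReal.ofReal (g x) ∂Q.μ).toReal = ∫ x in A, g x ∂Q.μ := by
  haveI := Q.prob
  rw [← ofReal_integral_eq_lintegral_ofReal
    ((integrable_of_bound Q.μ hg 1 fun x => abs_le.2 ⟨by linarith [h0 x], h1 x⟩).restrict)
    (Filter.Eventually.of_forall h0), ENNReal.toReal_ofReal (integral_nonneg h0)]

lemma trueRisk_eq {G : Set (Fin d → ℝ)} (hG : MeasurableSet G) :
    trueRisk Q G = (∫ x in Gᶜ, Q.f x ∂Q.μ) + ∫ x in G, (1 - Q.f x) ∂Q.μ := by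
  have h1 : trueRisk Q G = (Q.joint (lossSet G)).toReal := by
    rw [trueRisk, loss_eq_indicator, integral_indicator_const (1:ℝ) (measurableSet_lossSet hG)]
    simp [Measure.real]
  rw [h1, joint_lossSet Q hG,
    ENNReal.toReal_add (lint_ofReal_ne_top Q Q.f_le_one _)
      (lint_ofReal_ne_top Q (fun x => by linarith [Q.f_nonneg x]) _),
    lint_ofReal_toReal Q Q.f_meas Q.f_nonneg Q.f_le_one hG.compl,
    lint_ofReal_toReal Q (g := fun x => 1 - Q.f x) (measurable_const.sub Q.f_meas)
      (fun x => by linarith [Q.f_le_one x]) (fun x => by linarith [Q.f_nonneg x]) hG]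

lemma integrable_f : Integrable Q.f Q.μ := by
  haveI := Q.prob
  exact integrable_of_bound Q.μ Q.f_meas 1
    fun x => abs_le.2 ⟨by linarith [Q.f_nonneg x], Q.f_le_one x⟩

lemma integrable_g : Integrable (fun x => 1 - 2 * Q.f x) Q.μ := by
  haveI := Q.prob
  exact integrable_of_bound Q.μ (measurable_const.sub (Q.f_meas.const_mul 2)) 1
    fun x => abs_le.2 ⟨by linarith [Q.f_le_one x], by linarith [Q.f_nonneg x]⟩

lemma trueRisk_eq' {G : Set (Fin d → ℝ)} (hG : MeasurableSet G) :
    trueRisk Q G = (∫ x, Q.f x ∂Q.μ) + ∫ x in G, (1 - 2 * Q.f x) ∂Q.μ := by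
  haveI := Q.prob
  have hf := integrable_f Q
  have hsplit : (∫ x in G, Q.f x ∂Q.μ) + ∫ x in Gᶜ, Q.f x ∂Q.μ = ∫ x, Q.f x ∂Q.μ :=
    integral_add_compl hG hf
  have hsub : ∫ x in G, (1 - 2 * Q.f x) ∂Q.μ
      = (∫ x in G, (1 - Q.f x) ∂Q.μ) - ∫ x in G, Q.f x ∂Q.μ := by
    have hint : Integrable (fun x => 1 - Q.f x) Q.μ := by
      exact integrable_of_bound Q.μ (measurable_const.sub Q.f_meas) 1
        fun x => abs_le.2 ⟨by linarith [Q.f_le_one x], by linarith [Q.f_nonneg x]⟩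
    rw [← integral_sub hint.restrict hf.restrict]
    congr 1 with x
    ring
  rw [trueRisk_eq Q hG]
  linarith

lemma measurableSet_symmDiff {α : Type*} [MeasurableSpace α] {G₁ G₂ : Set α}
    (h1 : MeasurableSet G₁) (h2 : MeasurableSet G₂) :
    MeasurableSet (symmDiff G₁ G₂) := by
  rw [Set.symmDiff_def]
  exact (h1.diff h2).union (h2.diff h1)

lemma risk_diff_eq_dF {G : Set (Fin d → ℝ)} (hG : MeasurableSet G)
    (hB : MeasurableSet Q.bayes) :
    trueRisk Q G - trueRisk Q Q.bayes = Q.dF G Q.bayes := by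
  haveI := Q.prob
  set B := Q.bayes with hBdef
  have hg := integrable_g Q
  have hdisj1 : Disjoint (G ∩ B) (G \ B) :=
    Set.disjoint_left.2 fun x hx hx' => hx'.2 hx.2
  have hdisj2 : Disjoint (B ∩ G) (B \ G) :=
    Set.disjoint_left.2 fun x hx hx' => hx'.2 hx.2
  have hsplitG : ∫ x in G, (1 - 2 * Q.f x) ∂Q.μ
      = (∫ x in G ∩ B, (1 - 2 * Q.f x) ∂Q.μ) + ∫ x in G \ B, (1 - 2 * Q.f x) ∂Q.μ := by
    rw [← setIntegral_union hdisj1 (hG.diff hB) hg.integrableOn hg.integrableOn,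
      Set.inter_union_diff]
  have hsplitB : ∫ x in B, (1 - 2 * Q.f x) ∂Q.μ
      = (∫ x in B ∩ G, (1 - 2 * Q.f x) ∂Q.μ) + ∫ x in B \ G, (1 - 2 * Q.f x) ∂Q.μ := by
    rw [← setIntegral_union hdisj2 (hB.diff hG) hg.integrableOn hg.integrableOn,
      Set.inter_union_diff]
  have habs : Integrable (fun x => |2 * Q.f x - 1|) Q.μ := by
    exact integrable_of_bound Q.μ ((Q.f_meas.const_mul 2).sub measurable_const).abs 1
      fun x => by rw [abs_abs]; exact abs_le.2 ⟨by linarith [Q.f_nonneg x], by linarith [Q.f_le_one x]⟩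
  have hdisj3 : Disjoint (G \ B) (B \ G) :=
    Set.disjoint_left.2 fun x hx hx' => hx'.2 hx.1
  have hdF : Q.dF G B = (∫ x in G \ B, |2 * Q.f x - 1| ∂Q.μ)
      + ∫ x in B \ G, |2 * Q.f x - 1| ∂Q.μ := by
    rw [ClsModel.dF, Set.symmDiff_def,
      setIntegral_union hdisj3 (hB.diff hG) habs.integrableOn habs.integrableOn]
  have hcong1 : ∫ x in G \ B, |2 * Q.f x - 1| ∂Q.μ
      = ∫ x in G \ B, (1 - 2 * Q.f x) ∂Q.μ := by
    refine setIntegral_congr_fun (hG.diff hB) fun x hx => ?_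
    have hx2 : ¬ (1/2 ≤ Q.f x) := hx.2
    rw [abs_of_neg (by push_neg at hx2; linarith)]
    ring
  have hcong2 : ∫ x in B \ G, |2 * Q.f x - 1| ∂Q.μ
      = - ∫ x in B \ G, (1 - 2 * Q.f x) ∂Q.μ := by
    rw [← integral_neg]
    refine setIntegral_congr_fun (hB.diff hG) fun x hx => ?_
    have hx2 : (1:ℝ)/2 ≤ Q.f x := hx.1
    rw [abs_of_nonneg (by linarith)]
    ring
  have hBG : ∫ x in B ∩ G, (1 - 2 * Q.f x) ∂Q.μ
      = ∫ x in G ∩ B, (1 - 2 * Q.f x) ∂Q.μ := by rw [Set.inter_comm]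
  rw [trueRisk_eq' Q hG, trueRisk_eq' Q hB, hdF, hcong1, hcong2]
  linarith

lemma dF_nonneg {G₁ G₂ : Set (Fin d → ℝ)} (h1 : MeasurableSet G₁)
    (h2 : MeasurableSet G₂) : 0 ≤ Q.dF G₁ G₂ :=
  setIntegral_nonneg (measurableSet_symmDiff h1 h2) fun x _ => abs_nonneg _

lemma dF_le_one {G₁ G₂ : Set (Fin d → ℝ)} (h1 : MeasurableSet G₁)
    (h2 : MeasurableSet G₂) : Q.dF G₁ G₂ ≤ 1 := by
  haveI := Q.prob
  have habs : Integrable (fun x => |2 * Q.f x - 1|) Q.μ :=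
    integrable_of_bound Q.μ ((Q.f_meas.const_mul 2).sub measurable_const).abs 1
      fun x => by rw [abs_abs]; exact abs_le.2 ⟨by linarith [Q.f_nonneg x], by linarith [Q.f_le_one x]⟩
  calc Q.dF G₁ G₂ ≤ ∫ _x in symmDiff G₁ G₂, (1:ℝ) ∂Q.μ := by
        refine setIntegral_mono_on habs.integrableOn (integrable_const 1).integrableOn
          (measurableSet_symmDiff h1 h2) fun x _ => ?_
        exact abs_le.2 ⟨by linarith [Q.f_nonneg x], by linarith [Q.f_le_one x]⟩
    _ = (Q.μ (symmDiff G₁ G₂)).toReal := by simp [Measure.real]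
    _ ≤ (1 : ℝ≥0∞).toReal := ENNReal.toReal_mono ENNReal.one_ne_top prob_le_one
    _ = 1 := by simp

lemma trueRisk_nonneg (G : Set (Fin d → ℝ)) : 0 ≤ trueRisk Q G :=
  integral_nonneg fun z => by rcases loss_mem G z with h | h <;> simp [h]

lemma trueRisk_le_one {G : Set (Fin d → ℝ)} (hG : MeasurableSet G) :
    trueRisk Q G ≤ 1 := by
  haveI := joint_prob Q
  calc trueRisk Q G ≤ ∫ _z, (1:ℝ) ∂Q.joint :=
        integral_mono (integrable_loss Q hG) (integrable_const 1)
          fun z => by rcases loss_mem G z with h | h <;> simp [h]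
    _ = 1 := by simp



lemma exp_quad {y : ℝ} (hy : |y| ≤ 1) : Real.exp y ≤ 1 + y + (3/4) * y^2 := by
  have h := Real.exp_bound hy (n := 2) (by norm_num)
  have hsum : ∑ m ∈ Finset.range 2, y ^ m / m.factorial = 1 + y := by
    simp [Finset.sum_range_succ]
  rw [hsum] at h
  norm_num [Nat.factorial] at h
  have h2 := (abs_le.1 h).2
  nlinarith [sq_abs y]

lemma chernoff {α : Type*} [MeasurableSpace α] (μ : Measure α) [IsProbabilityMeasure μ]
    (X : α → ℝ) (hX : Measurable X) (hb : ∀ z, |X z| ≤ 1) (hm : ∫ z, X z ∂μ = 0)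
    (n : ℕ) {t : ℝ} (ht0 : 0 ≤ t) (ht2 : t ≤ 2) :
    ((Measure.pi fun _ : Fin n => μ) {ω | (n:ℝ) * t ≤ ∑ i, X (ω i)}).toReal
      ≤ Real.exp (-(3/16) * n * t^2) := by
  haveI : IsProbabilityMeasure (Measure.pi fun _ : Fin n => μ) := inferInstance
  set l := t/2 with hl
  have hl0 : 0 ≤ l := by positivity
  have hl1 : l ≤ 1 := by rw [hl]; linarith
  have hXint : Integrable X μ := integrable_of_bound μ hX 1 hb
  have hX2int : Integrable (fun z => X z ^ 2) μ :=
    integrable_of_bound μ (hX.pow_const 2) 1 fun z => by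
      rw [abs_of_nonneg (sq_nonneg _)]; nlinarith [hb z, abs_nonneg (X z), sq_abs (X z)]
  have hexp_int : Integrable (fun z => Real.exp (l * X z)) μ := by
    refine integrable_of_bound μ (Real.measurable_exp.comp (hX.const_mul l)) (Real.exp 1)
      fun z => ?_
    rw [abs_of_nonneg (Real.exp_pos _).le]
    refine Real.exp_le_exp.2 ?_
    calc l * X z ≤ |l * X z| := le_abs_self _
      _ = l * |X z| := by rw [abs_mul, abs_of_nonneg hl0]
      _ ≤ 1 * 1 := mul_le_mul hl1 (hb z) (abs_nonneg _) zero_le_one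
      _ = 1 := one_mul 1
  -- single-factor mgf bound
  have hX2le : ∫ z, X z ^ 2 ∂μ ≤ 1 := by
    calc ∫ z, X z ^ 2 ∂μ ≤ ∫ _z, (1:ℝ) ∂μ :=
          integral_mono hX2int (integrable_const 1)
            fun z => by nlinarith [hb z, abs_nonneg (X z), sq_abs (X z)]
      _ = 1 := by simp
  have hone : ∫ z, Real.exp (l * X z) ∂μ ≤ 1 + (3/4) * l^2 := by
    have hpt : ∀ z, Real.exp (l * X z) ≤ (1 + l * X z) + ((3/4) * l^2) * X z ^ 2 := by
      intro z
      have habs : |l * X z| ≤ 1 := by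
        rw [abs_mul, abs_of_nonneg hl0]
        calc l * |X z| ≤ 1 * 1 := mul_le_mul hl1 (hb z) (abs_nonneg _) zero_le_one
          _ = 1 := one_mul 1
      calc Real.exp (l * X z) ≤ 1 + l * X z + (3/4) * (l * X z)^2 := exp_quad habs
        _ = (1 + l * X z) + ((3/4) * l^2) * X z ^ 2 := by ring
    have hadd : Integrable (fun z => 1 + l * X z) μ := by
      refine integrable_of_bound μ (measurable_const.add (hX.const_mul l)) 2 fun z => ?_
      have h1 : |l * X z| ≤ 1 := by
        rw [abs_mul, abs_of_nonneg hl0]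
        calc l * |X z| ≤ 1 * 1 := mul_le_mul hl1 (hb z) (abs_nonneg _) zero_le_one
          _ = 1 := one_mul 1
      have h2 := abs_le.1 h1
      exact abs_le.2 ⟨by linarith [h2.1], by linarith [h2.2]⟩
    calc ∫ z, Real.exp (l * X z) ∂μ
        ≤ ∫ z, ((1 + l * X z) + ((3/4) * l^2) * X z ^ 2) ∂μ :=
          integral_mono hexp_int (hadd.add (hX2int.const_mul _)) hpt
      _ = 1 + l * (∫ z, X z ∂μ) + (3/4) * l^2 * ∫ z, X z ^ 2 ∂μ := by
          rw [integral_add hadd (hX2int.const_mul _),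
            integral_add (integrable_const 1) (hXint.const_mul l),
            integral_const_mul, integral_const_mul]
          simp [mul_assoc]
      _ ≤ 1 + (3/4) * l^2 := by
          rw [hm]
          nlinarith [sq_nonneg l, hX2le]
  -- mgf of the sum
  have hmgf : ProbabilityTheory.mgf (fun ω : Fin n → α => ∑ i, X (ω i))
      (Measure.pi fun _ => μ) l ≤ Real.exp ((3/4) * l^2 * n) := by
    have hprod : ∀ ω : Fin n → α,
        Real.exp (l * ∑ i, X (ω i)) = ∏ i, Real.exp (l * X (ω i)) := by
      intro ω; rw [Finset.mul_sum, Real.exp_sum]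
    have hpi : ∫ ω, Real.exp (l * ∑ i, X (ω i)) ∂(Measure.pi fun _ : Fin n => μ)
        = (∫ z, Real.exp (l * X z) ∂μ) ^ n := by
      simp_rw [hprod]
      letI : MeasureSpace α := { volume := μ }
      haveI : SigmaFinite (volume : Measure α) := by
        haveI : IsProbabilityMeasure (volume : Measure α) := ‹_›
        infer_instance
      have := MeasureTheory.integral_fintype_prod_eq_pow (𝕜 := ℝ) (ι := Fin n) (μ := μ)
        (fun z => Real.exp (l * X z))
      simpa using this
    rw [ProbabilityTheory.mgf]
    calc ∫ ω, Real.exp (l * ∑ i, X (ω i)) ∂(Measure.pi fun _ : Fin n => μ)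
        = (∫ z, Real.exp (l * X z) ∂μ) ^ n := hpi
      _ ≤ (1 + (3/4) * l^2)^n :=
          pow_le_pow_left₀ (integral_nonneg fun z => (Real.exp_pos _).le) hone n
      _ ≤ (Real.exp ((3/4) * l^2))^n :=
          pow_le_pow_left₀ (by positivity) (by linarith [Real.add_one_le_exp ((3/4) * l^2)]) n
      _ = Real.exp ((3/4) * l^2 * n) := by
          rw [← Real.exp_nat_mul]; ring_nf
  have hmeasS : Measurable fun ω : Fin n → α => ∑ i, X (ω i) :=
    Finset.measurable_sum _ fun i _ => hX.comp (measurable_pi_apply i)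
  have hint : Integrable (fun ω : Fin n → α => Real.exp (l * ∑ i, X (ω i)))
      (Measure.pi fun _ : Fin n => μ) := by
    refine integrable_of_bound _ (Real.measurable_exp.comp (hmeasS.const_mul l))
      (Real.exp n) fun ω => ?_
    rw [abs_of_nonneg (Real.exp_pos _).le]
    refine Real.exp_le_exp.2 ?_
    have hsum_abs : |∑ i, X (ω i)| ≤ (n : ℝ) := by
      calc |∑ i, X (ω i)| ≤ ∑ i, |X (ω i)| := Finset.abs_sum_le_sum_abs _ _
        _ ≤ ∑ _i : Fin n, (1:ℝ) := Finset.sum_le_sum fun i _ => hb _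
        _ = n := by simp
    calc l * ∑ i, X (ω i) ≤ |l * ∑ i, X (ω i)| := le_abs_self _
      _ = l * |∑ i, X (ω i)| := by rw [abs_mul, abs_of_nonneg hl0]
      _ ≤ 1 * (n:ℝ) := mul_le_mul hl1 hsum_abs (abs_nonneg _) zero_le_one
      _ = n := one_mul _
  have hmark := ProbabilityTheory.measure_ge_le_exp_mul_mgf
    (μ := Measure.pi fun _ : Fin n => μ) (X := fun ω => ∑ i, X (ω i))
    ((n:ℝ) * t) hl0 hint
  calc ((Measure.pi fun _ : Fin n => μ) {ω | (n:ℝ) * t ≤ ∑ i, X (ω i)}).toReal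
      ≤ Real.exp (-l * ((n:ℝ) * t)) * ProbabilityTheory.mgf
          (fun ω : Fin n → α => ∑ i, X (ω i)) (Measure.pi fun _ => μ) l := hmark
    _ ≤ Real.exp (-l * ((n:ℝ) * t)) * Real.exp ((3/4) * l^2 * n) :=
        mul_le_mul_of_nonneg_left hmgf (Real.exp_pos _).le
    _ = Real.exp (-l * ((n:ℝ) * t) + (3/4) * l^2 * n) := (Real.exp_add _ _).symm
    _ ≤ Real.exp (-(3/16) * n * t^2) := by
        refine Real.exp_le_exp.2 ?_
        rw [hl]
        have hn : (0:ℝ) ≤ n := Nat.cast_nonneg n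
        nlinarith [mul_nonneg hn (sq_nonneg t)]



lemma samples_prob (n : ℕ) : IsProbabilityMeasure (Q.samples n) := by
  haveI := joint_prob Q
  exact show IsProbabilityMeasure (Measure.pi fun _ : Fin n => Q.joint) from inferInstance

lemma tail_bound {n : ℕ} (hn : 0 < n) {G : Set (Fin d → ℝ)} (hG : MeasurableSet G)
    {t : ℝ} (ht0 : 0 ≤ t) (ht2 : t ≤ 2) :
    (Q.samples n {ω | t ≤ |empRisk ω G - trueRisk Q G|}).toReal
      ≤ 2 * Real.exp (-(3/16) * n * t^2) := by
  haveI := joint_prob Q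
  haveI := samples_prob Q n
  have hnR : (0:ℝ) < n := by exact_mod_cast hn
  have hmean : ∫ z, (loss G z - trueRisk Q G) ∂Q.joint = 0 := by
    rw [integral_sub (integrable_loss Q hG) (integrable_const _), integral_const]
    simp [trueRisk]
  have hmean' : ∫ z, (trueRisk Q G - loss G z) ∂Q.joint = 0 := by
    rw [integral_sub (integrable_const _) (integrable_loss Q hG), integral_const]
    simp [trueRisk]
  have hb : ∀ z, |loss G z - trueRisk Q G| ≤ 1 := by
    intro z
    have h0 := trueRisk_nonneg Q G
    have h1 := trueRisk_le_one Q hG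
    rcases loss_mem G z with h | h <;> rw [h] <;> rw [abs_le] <;> constructor <;> linarith
  have hplus := chernoff Q.joint (fun z => loss G z - trueRisk Q G)
    ((measurable_loss hG).sub measurable_const) hb hmean n ht0 ht2
  have hminus := chernoff Q.joint (fun z => trueRisk Q G - loss G z)
    (measurable_const.sub (measurable_loss hG))
    (fun z => by rw [abs_sub_comm]; exact hb z) hmean' n ht0 ht2
  set Ap : Set (Fin n → (Fin d → ℝ) × Bool) :=
    {ω | (n:ℝ) * t ≤ ∑ i, (loss G (ω i) - trueRisk Q G)} with hAp
  set Am : Set (Fin n → (Fin d → ℝ) × Bool) :=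
    {ω | (n:ℝ) * t ≤ ∑ i, (trueRisk Q G - loss G (ω i))} with hAm
  have hsub : {ω : Fin n → (Fin d → ℝ) × Bool | t ≤ |empRisk ω G - trueRisk Q G|}
      ⊆ Ap ∪ Am := by
    intro ω hω
    have hemp : empRisk ω G = (n:ℝ)⁻¹ * ∑ i, loss G (ω i) := rfl
    have hsum1 : ∑ i, (loss G (ω i) - trueRisk Q G)
        = (∑ i, loss G (ω i)) - (n:ℝ) * trueRisk Q G := by
      rw [Finset.sum_sub_distrib, Finset.sum_const, Finset.card_univ, Fintype.card_fin,
        nsmul_eq_mul]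
    have hsum2 : ∑ i, (trueRisk Q G - loss G (ω i))
        = (n:ℝ) * trueRisk Q G - ∑ i, loss G (ω i) := by
      rw [Finset.sum_sub_distrib, Finset.sum_const, Finset.card_univ, Fintype.card_fin,
        nsmul_eq_mul]
    have hω' : t ≤ |empRisk ω G - trueRisk Q G| := hω
    have hS : (n:ℝ) * ((n:ℝ)⁻¹ * ∑ i, loss G (ω i)) = ∑ i, loss G (ω i) := by
      field_simp
    rcases le_abs.1 hω' with hc | hc
    · left
      show (n:ℝ) * t ≤ _
      rw [hsum1]
      rw [hemp] at hc
      have h2 := mul_le_mul_of_nonneg_left hc hnR.le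
      rw [mul_sub, hS] at h2
      linarith
    · right
      show (n:ℝ) * t ≤ _
      rw [hsum2]
      rw [hemp] at hc
      have h2 := mul_le_mul_of_nonneg_left hc hnR.le
      rw [mul_neg, mul_sub, hS] at h2
      linarith
  have hm1 : (Q.samples n {ω | t ≤ |empRisk ω G - trueRisk Q G|}).toReal
      ≤ (Q.samples n (Ap ∪ Am)).toReal :=
    ENNReal.toReal_mono (measure_ne_top _ _) (measure_mono hsub)
  have hm2 : (Q.samples n (Ap ∪ Am)).toReal
      ≤ (Q.samples n Ap).toReal + (Q.samples n Am).toReal := by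
    have h1 := measure_union_le (μ := Q.samples n) Ap Am
    have h2 := ENNReal.toReal_mono
      (by exact ENNReal.add_ne_top.2 ⟨measure_ne_top _ _, measure_ne_top _ _⟩) h1
    rwa [ENNReal.toReal_add (measure_ne_top _ _) (measure_ne_top _ _)] at h2
  have hm3 : (Q.samples n Ap).toReal ≤ Real.exp (-(3/16) * n * t^2) := hplus
  have hm4 : (Q.samples n Am).toReal ≤ Real.exp (-(3/16) * n * t^2) := hminus
  linarith


end ClsProof

end Aux

open ClsProof in
/-- **Proposition 2.2** (convergence rates for empirical risk minimizers without the
Tsybakov noise condition). -/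
theorem general_convergence_rates_without_noise_condition
    (d : ℕ) (τ : ℕ → ℝ) (hτpos : ∀ n, 0 < τ n) (hτmono : Monotone τ)
    (𝔔 : Set (ClsModel d)) (N : ℕ → Finset (Set (Fin d → ℝ)))
    -- (i) measurability
    (hmeas : ∀ _Q ∈ 𝔔, ∀ n, ∀ G ∈ N n, MeasurableSet G)
    (hmeasB : ∀ Q ∈ 𝔔, MeasurableSet Q.bayes)
    (N₀ : ℕ)
    -- (ii) approximation
    (c₂ : ℝ) (hc₂ : 0 < c₂)
    (happrox : ∀ n ≥ N₀, ∀ Q ∈ 𝔔, ∃ G ∈ N n, Q.dF G Q.bayes ≤ c₂ * (τ n)⁻¹)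
    -- (iii) entropy bound
    (c₃ ρ : ℝ) (hc₃ : 0 < c₃) (hρ : 0 < ρ)
    (hent : ∀ n ≥ N₀, Real.log ((N n).card) ≤ c₃ * (n : ℝ) ^ (ρ / (ρ + 2))) :
    ∀ p : ℝ, 1 ≤ p →
      -- limsup_n sup_Q τ̃_n^{p} E[d_{f_Q}^p(Ĝ_n, G*_Q)] < ∞
      ∃ C : ℝ, ∃ N₁ : ℕ, ∀ n ≥ N₁, ∀ Q ∈ 𝔔,
        ∀ Ghat : (Fin n → (Fin d → ℝ) × Bool) → Set (Fin d → ℝ),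
          isERM (↑(N n) : Set (Set (Fin d → ℝ))) Ghat →
            min (τ n) ((n : ℝ) ^ (1 / (ρ + 2))) ^ p *
              clsRisk Q n Ghat ClsModel.dF p ≤ C := by
  classical
  intro p hp
  have hp0 : (0:ℝ) ≤ p := by linarith
  have hρ2 : (0:ℝ) < ρ + 2 := by linarith
  have hlog2 : (0:ℝ) < Real.log 2 := Real.log_pos (by norm_num)
  obtain ⟨K₀, hK₀⟩ : ∃ K₀ : ℝ, K₀ = Real.log 2 + c₃ + p * ((ρ + 2)/ρ) := ⟨_, rfl⟩
  have hK₀pos : 0 < K₀ := by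
    have h1 : (0:ℝ) ≤ p * ((ρ+2)/ρ) := mul_nonneg hp0 (by positivity)
    rw [hK₀]
    linarith
  obtain ⟨K₁, hK₁⟩ : ∃ K₁ : ℝ, K₁ = Real.sqrt ((16/3) * K₀) := ⟨_, rfl⟩
  refine ⟨(2 * K₁ + c₂)^p + 1, max (max N₀ 1) ⌈((4/3) * K₀)^((ρ+2)/2)⌉₊, ?_⟩
  intro n hn Q hQ Ghat hERM
  -- basic facts about n
  have hnN₀ : n ≥ N₀ := le_trans (le_trans (le_max_left N₀ 1) (le_max_left _ _)) hn
  have hn1 : 1 ≤ n := le_trans (le_trans (le_max_right N₀ 1) (le_max_left _ _)) hn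
  have hnR : (1:ℝ) ≤ (n:ℝ) := by exact_mod_cast hn1
  have hnpos : (0:ℝ) < (n:ℝ) := by linarith
  haveI := joint_prob Q
  haveI := samples_prob Q n
  obtain ⟨ν, hν⟩ : ∃ ν : ℝ, ν = (n:ℝ) ^ (ρ/(ρ+2)) := ⟨_, rfl⟩
  have hν1 : 1 ≤ ν := hν ▸ Real.one_le_rpow hnR (by positivity)
  have hνpos : 0 < ν := by linarith
  obtain ⟨A, hA⟩ : ∃ A : ℝ, A = Real.log 2 + c₃ * ν + p * Real.log n := ⟨_, rfl⟩
  have hlogn0 : (0:ℝ) ≤ Real.log n := Real.log_nonneg hnR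
  have hA0 : 0 ≤ A := by
    rw [hA]
    have h1 := mul_nonneg hp0 hlogn0
    have h2 := mul_nonneg hc₃.le (by linarith : (0:ℝ) ≤ ν)
    linarith
  have hAle : A ≤ K₀ * ν := by
    have hlog : Real.log n ≤ ν * ((ρ+2)/ρ) := by
      have h1 := Real.log_le_rpow_div (x := (n:ℝ)) (ε := ρ/(ρ+2))
        (by positivity) (by positivity)
      calc Real.log n ≤ (n:ℝ)^(ρ/(ρ+2)) / (ρ/(ρ+2)) := h1
        _ = ν * ((ρ+2)/ρ) := by
            rw [hν, div_div_eq_mul_div, mul_div_assoc]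
    have h2 : p * Real.log n ≤ p * (ν * ((ρ+2)/ρ)) :=
      mul_le_mul_of_nonneg_left hlog hp0
    have h3 : Real.log 2 ≤ Real.log 2 * ν := le_mul_of_one_le_right hlog2.le hν1
    have h4 : (0:ℝ) ≤ p * ((ρ+2)/ρ) := mul_nonneg hp0 (by positivity)
    rw [hK₀, hA]
    nlinarith
  have hνn : ν * (n:ℝ)^(2/(ρ+2)) = (n:ℝ) := by
    rw [hν, ← Real.rpow_add hnpos, show ρ/(ρ+2) + 2/(ρ+2) = 1 by field_simp,
      Real.rpow_one]
  have hAdiv : (0:ℝ) ≤ (16/3) * A / n := div_nonneg (by linarith) hnpos.le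
  obtain ⟨t, ht⟩ : ∃ t : ℝ, t = Real.sqrt ((16/3) * A / n) := ⟨_, rfl⟩
  have ht0 : 0 ≤ t := ht ▸ Real.sqrt_nonneg _
  have htsq : t^2 = (16/3) * A / n := by rw [ht]; exact Real.sq_sqrt hAdiv
  -- t ≤ 2
  have hceil : ((4/3) * K₀)^((ρ+2)/2) ≤ (n:ℝ) := by
    have h1 : (⌈((4/3) * K₀)^((ρ+2)/2)⌉₊ : ℝ) ≤ (n:ℝ) :=
      Nat.cast_le.2 (le_trans (le_max_right _ _) hn)
    exact le_trans (Nat.le_ceil _) h1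
  have hn23 : (4/3) * K₀ ≤ (n:ℝ)^(2/(ρ+2)) := by
    have h0 : (0:ℝ) ≤ (4/3) * K₀ := by positivity
    have h1 := Real.rpow_le_rpow (by positivity) hceil
      (by positivity : (0:ℝ) ≤ 2/(ρ+2))
    rwa [← Real.rpow_mul h0, show (ρ+2)/2 * (2/(ρ+2)) = 1 by field_simp,
      Real.rpow_one] at h1
  have ht2 : t ≤ 2 := by
    have harg : (16/3) * A / n ≤ 4 := by
      have h1 : (4/3)*K₀*ν ≤ (n:ℝ) := by
        calc (4/3)*K₀*ν ≤ (n:ℝ)^(2/(ρ+2)) * ν :=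
              mul_le_mul_of_nonneg_right hn23 hνpos.le
          _ = (n:ℝ) := by rw [mul_comm]; exact hνn
      rw [div_le_iff₀ hnpos]
      calc (16/3) * A ≤ (16/3) * (K₀ * ν) := by linarith
        _ = 4 * ((4/3)*K₀*ν) := by ring
        _ ≤ 4 * (n:ℝ) := by linarith
    calc t ≤ Real.sqrt 4 := by rw [ht]; exact Real.sqrt_le_sqrt harg
      _ = 2 := by
          rw [show (4:ℝ) = 2^2 by norm_num, Real.sqrt_sq (by norm_num : (0:ℝ) ≤ 2)]
  -- the approximating set and the bad event
  have hB : MeasurableSet Q.bayes := hmeasB Q hQ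
  obtain ⟨G₀, hG₀mem, hG₀⟩ := happrox n hnN₀ Q hQ
  set E : Set (Fin n → (Fin d → ℝ) × Bool) :=
    ⋃ G ∈ N n, {ω | t ≤ |empRisk ω G - trueRisk Q G|} with hE
  have hEmeas : MeasurableSet E := by
    refine MeasurableSet.biUnion ((N n).countable_toSet) fun G hG => ?_
    have h1 : Measurable fun ω : Fin n → (Fin d → ℝ) × Bool =>
        empRisk ω G - trueRisk Q G := by
      have h2 : Measurable fun ω : Fin n → (Fin d → ℝ) × Bool =>
          (n:ℝ)⁻¹ * ∑ i, loss G (ω i) :=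
        measurable_const.mul (Finset.measurable_sum _ fun i _ =>
          (measurable_loss (hmeas Q hQ n G hG)).comp (measurable_pi_apply i))
      exact h2.sub measurable_const
    exact measurableSet_le measurable_const h1.abs
  -- tail bound for the bad event
  have hEbound : (Q.samples n E).toReal ≤ Real.exp (-(p * Real.log n)) := by
    have hcard1 : 0 < (N n).card := Finset.card_pos.2 ⟨G₀, hG₀mem⟩
    have hcardR : (0:ℝ) < ((N n).card : ℝ) := by exact_mod_cast hcard1
    have hcard : ((N n).card : ℝ) ≤ Real.exp (c₃ * ν) := by
      calc ((N n).card:ℝ) = Real.exp (Real.log ((N n).card)) := (Real.exp_log hcardR).symm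
        _ ≤ Real.exp (c₃ * ν) := Real.exp_le_exp.2 (by rw [hν]; exact hent n hnN₀)
    have hsum : Q.samples n E
        ≤ ∑ G ∈ N n, Q.samples n {ω | t ≤ |empRisk ω G - trueRisk Q G|} :=
      measure_biUnion_finset_le _ _
    have h3 : (Q.samples n E).toReal
        ≤ ∑ G ∈ N n, (Q.samples n {ω | t ≤ |empRisk ω G - trueRisk Q G|}).toReal := by
      refine le_trans (ENNReal.toReal_mono ?_ hsum)
        (le_of_eq (ENNReal.toReal_sum fun G _ => measure_ne_top _ _))
      exact (ENNReal.sum_lt_top.2 fun G _ => measure_lt_top _ _).ne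
    have hexpA : -(3/16) * (n:ℝ) * t^2 = -A := by
      rw [htsq]
      field_simp
    have h4 : (Q.samples n E).toReal ≤ ((N n).card : ℝ) * (2 * Real.exp (-A)) := by
      refine le_trans h3 ?_
      rw [← hexpA]
      calc ∑ G ∈ N n, (Q.samples n {ω | t ≤ |empRisk ω G - trueRisk Q G|}).toReal
          ≤ ∑ _G ∈ N n, 2 * Real.exp (-(3/16) * (n:ℝ) * t^2) :=
            Finset.sum_le_sum fun G hG =>
              tail_bound Q (by omega) (hmeas Q hQ n G hG) ht0 ht2
        _ = ((N n).card : ℝ) * (2 * Real.exp (-(3/16) * (n:ℝ) * t^2)) := by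
            rw [Finset.sum_const, nsmul_eq_mul]
    have h5 : ((N n).card : ℝ) * (2 * Real.exp (-A)) = ((N n).card : ℝ)
        * Real.exp (-(c₃ * ν)) * Real.exp (-(p * Real.log n)) := by
      rw [hA, show -(Real.log 2 + c₃ * ν + p * Real.log n)
        = -Real.log 2 + (-(c₃ * ν) + -(p * Real.log n)) by ring, Real.exp_add,
        Real.exp_add, Real.exp_neg, Real.exp_log (by norm_num : (0:ℝ) < 2)]
      ring
    have h6 : ((N n).card : ℝ) * Real.exp (-(c₃ * ν)) ≤ 1 := by
      calc ((N n).card : ℝ) * Real.exp (-(c₃ * ν))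
          ≤ Real.exp (c₃ * ν) * Real.exp (-(c₃ * ν)) :=
            mul_le_mul_of_nonneg_right hcard (Real.exp_pos _).le
        _ = 1 := by rw [← Real.exp_add]; simp
    calc (Q.samples n E).toReal ≤ ((N n).card : ℝ) * (2 * Real.exp (-A)) := h4
      _ = ((N n).card : ℝ) * Real.exp (-(c₃ * ν)) * Real.exp (-(p * Real.log n)) := h5
      _ ≤ 1 * Real.exp (-(p * Real.log n)) :=
          mul_le_mul_of_nonneg_right h6 (Real.exp_pos _).le
      _ = Real.exp (-(p * Real.log n)) := one_mul _
  -- pointwise domination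
  obtain ⟨t₁, ht₁⟩ : ∃ t₁ : ℝ, t₁ = 2*t + c₂ * (τ n)⁻¹ := ⟨_, rfl⟩
  have hτn := hτpos n
  have ht₁0 : 0 ≤ t₁ := by
    rw [ht₁]
    have h1 : (0:ℝ) ≤ c₂ * (τ n)⁻¹ := by positivity
    linarith
  have hGhatmem : ∀ ω, Ghat ω ∈ N n := fun ω => Finset.mem_coe.1 (hERM ω).1
  have hGhatmeas : ∀ ω, MeasurableSet (Ghat ω) := fun ω => hmeas Q hQ n _ (hGhatmem ω)
  have hpoint : ∀ ω, Q.dF (Ghat ω) Q.bayes ^ p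
      ≤ t₁^p + E.indicator (fun _ => (1:ℝ)) ω := by
    intro ω
    by_cases hωE : ω ∈ E
    · have h1 : Q.dF (Ghat ω) Q.bayes ^ p ≤ 1 :=
        Real.rpow_le_one (dF_nonneg Q (hGhatmeas ω) hB) (dF_le_one Q (hGhatmeas ω) hB) hp0
      have h2 : (0:ℝ) ≤ t₁^p := Real.rpow_nonneg ht₁0 p
      rw [Set.indicator_of_mem hωE]
      linarith
    · have hnot : ∀ G ∈ N n, |empRisk ω G - trueRisk Q G| < t := by
        intro G hG
        by_contra hcon
        push_neg at hcon
        exact hωE (Set.mem_biUnion hG hcon)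
      have hb1 := abs_lt.1 (hnot _ (hGhatmem ω))
      have hb2 := abs_lt.1 (hnot _ hG₀mem)
      have hopt := (hERM ω).2 G₀ (Finset.mem_coe.2 hG₀mem)
      have hdF : Q.dF (Ghat ω) Q.bayes = trueRisk Q (Ghat ω) - trueRisk Q Q.bayes :=
        (risk_diff_eq_dF Q (hGhatmeas ω) hB).symm
      have hdF0 : trueRisk Q G₀ - trueRisk Q Q.bayes = Q.dF G₀ Q.bayes :=
        risk_diff_eq_dF Q (hmeas Q hQ n G₀ hG₀mem) hB
      have hle : Q.dF (Ghat ω) Q.bayes ≤ t₁ := by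
        rw [hdF, ht₁]
        linarith
      have h3 := Real.rpow_le_rpow (dF_nonneg Q (hGhatmeas ω) hB) hle hp0
      rw [Set.indicator_of_notMem hωE]
      linarith
  -- integrate
  have hgint : Integrable (fun ω => t₁^p + E.indicator (fun _ => (1:ℝ)) ω)
      (Q.samples n) :=
    (integrable_const _).add ((integrable_const 1).indicator hEmeas)
  have hrisk : clsRisk Q n Ghat ClsModel.dF p ≤ t₁^p + (Q.samples n E).toReal := by
    rw [clsRisk]
    calc ∫ ω, Q.dF (Ghat ω) Q.bayes ^ p ∂Q.samples n
        ≤ ∫ ω, (t₁^p + E.indicator (fun _ => (1:ℝ)) ω) ∂Q.samples n :=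
          integral_mono_of_nonneg
            (Filter.Eventually.of_forall fun ω =>
              Real.rpow_nonneg (dF_nonneg Q (hGhatmeas ω) hB) p)
            hgint (Filter.Eventually.of_forall hpoint)
      _ = t₁^p + (Q.samples n E).toReal := by
          rw [integral_add (integrable_const _) ((integrable_const 1).indicator hEmeas),
            integral_const, integral_indicator_const _ hEmeas]
          simp [Measure.real]
  -- final arithmetic
  obtain ⟨T, hT⟩ : ∃ T : ℝ, T = min (τ n) ((n:ℝ)^(1/(ρ+2))) := ⟨_, rfl⟩
  rw [show min (τ n) ((n:ℝ)^(1/(ρ+2))) = T from hT.symm]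
  have hT0 : 0 < T := hT ▸ lt_min hτn (Real.rpow_pos_of_pos hnpos _)
  have hTn : T ≤ (n:ℝ)^(1/(ρ+2)) := hT ▸ min_le_right _ _
  have htail : T^p * (Q.samples n E).toReal ≤ 1 := by
    have h1 : T ≤ (n:ℝ) := by
      refine le_trans hTn ?_
      calc (n:ℝ)^(1/(ρ+2)) ≤ (n:ℝ)^(1:ℝ) :=
            Real.rpow_le_rpow_of_exponent_le hnR (by rw [div_le_one hρ2]; linarith)
        _ = (n:ℝ) := Real.rpow_one _
    have h2 : T^p ≤ (n:ℝ)^p := Real.rpow_le_rpow hT0.le h1 hp0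
    have h3 : Real.exp (-(p * Real.log n)) = (n:ℝ)^(-p) := by
      rw [Real.rpow_def_of_pos hnpos]
      congr 1
      ring
    have h4 := hEbound
    rw [h3] at h4
    calc T^p * (Q.samples n E).toReal ≤ (n:ℝ)^p * (n:ℝ)^(-p) :=
          mul_le_mul h2 h4 ENNReal.toReal_nonneg (by positivity)
      _ = 1 := by rw [← Real.rpow_add hnpos]; simp
  have hmain : T^p * t₁^p ≤ (2*K₁ + c₂)^p := by
    rw [← Real.mul_rpow hT0.le ht₁0]
    refine Real.rpow_le_rpow (mul_nonneg hT0.le ht₁0) ?_ hp0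
    have hτt : T * t ≤ K₁ := by
      rw [hK₁]
      refine (Real.le_sqrt (mul_nonneg hT0.le ht0) (by linarith)).2 ?_
      have hsq : T^2 ≤ (n:ℝ)^(2/(ρ+2)) := by
        have h5 : T^2 ≤ ((n:ℝ)^(1/(ρ+2)))^2 := pow_le_pow_left₀ hT0.le hTn 2
        rwa [← Real.rpow_natCast ((n:ℝ)^(1/(ρ+2))) 2, ← Real.rpow_mul hnpos.le,
          show 1/(ρ+2) * ((2:ℕ):ℝ) = 2/(ρ+2) by push_cast; ring] at h5
      have h6 : (T*t)^2 = T^2 * t^2 := by ring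
      rw [h6, htsq]
      have h7 : T^2 * ((16/3) * A / n) ≤ (n:ℝ)^(2/(ρ+2)) * ((16/3) * (K₀ * ν) / n) := by
        refine mul_le_mul hsq ?_ hAdiv (Real.rpow_nonneg hnpos.le _)
        have h8 : (16/3) * A ≤ (16/3) * (K₀ * ν) := by linarith
        exact div_le_div_of_nonneg_right h8 hnpos.le
      refine le_trans h7 (le_of_eq ?_)
      rw [show (n:ℝ)^(2/(ρ+2)) * ((16/3) * (K₀ * ν) / n)
        = (16/3) * K₀ * ((ν * (n:ℝ)^(2/(ρ+2))) / n) by ring, hνn,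
        div_self hnpos.ne', mul_one]
    have hτinv : T * (c₂ * (τ n)⁻¹) ≤ c₂ := by
      have h8 : T ≤ τ n := hT ▸ min_le_left _ _
      have h9 : T * (τ n)⁻¹ ≤ 1 := by
        have := (div_le_one hτn).2 h8
        rwa [div_eq_mul_inv] at this
      calc T * (c₂ * (τ n)⁻¹) = T * (τ n)⁻¹ * c₂ := by ring
        _ ≤ 1 * c₂ := mul_le_mul_of_nonneg_right h9 hc₂.le
        _ = c₂ := one_mul _
    calc T * t₁ = 2*(T*t) + T*(c₂*(τ n)⁻¹) := by rw [ht₁]; ring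
      _ ≤ 2*K₁ + c₂ := by linarith
  calc T ^ p * clsRisk Q n Ghat ClsModel.dF p
      ≤ T^p * (t₁^p + (Q.samples n E).toReal) :=
        mul_le_mul_of_nonneg_left hrisk (Real.rpow_nonneg hT0.le p)
    _ = T^p * t₁^p + T^p * (Q.samples n E).toReal := by ring
    _ ≤ (2*K₁ + c₂)^p + 1 := add_le_add hmain htail
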